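/- Let T > 0, let J ∈ ℝ^{n×n} be skew-symmetric, and let K : [0,T] → ℝ^{m×n} and D : [0,T] → ℝ^{m×m} be matrix-valued functions such that D(t) is symmetric for every t ∈ [0,T]. Suppose Φ : [0,T] → ℝ^{n×n} is differentiable, Φ(0) = I_n, and Φ'(t) = K(t)ᵀ D(t) K(t) Jᵀ Φ(t) for all t ∈ [0,T]. Then Φ(t)ᵀ J Φ(t) = J for all t ∈ [0,T], i.e. Φ(t) is symplectic with respect to J. -/

import Mathlib

open Matrix
open scoped Matrix.Norms.L2Operator

/-- the backward sensitivity matrix of a continuous-time Hamiltonian DNN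
is symplectic with respect to the (constant, skew-symmetric) interconnection matrix `J`. -/
theorem stmt_2 {n m : ℕ} (T : ℝ) (hT : 0 < T)
    (J : Matrix (Fin n) (Fin n) ℝ) (hJ : Jᵀ = -J)
    (K : ℝ → Matrix (Fin m) (Fin n) ℝ) (D : ℝ → Matrix (Fin m) (Fin m) ℝ)
    (hD : ∀ t ∈ Set.Icc (0 : ℝ) T, (D t)ᵀ = D t)
    (Φ : ℝ → Matrix (Fin n) (Fin n) ℝ)
    (hΦ0 : Φ 0 = 1)
    (hΦ : ∀ t ∈ Set.Icc (0 : ℝ) T,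
      HasDerivWithinAt Φ ((K t)ᵀ * D t * K t * Jᵀ * Φ t) (Set.Icc (0 : ℝ) T) t) :
    ∀ t ∈ Set.Icc (0 : ℝ) T, (Φ t)ᵀ * J * Φ t = J := by
  set L : Matrix (Fin n) (Fin n) ℝ →L[ℝ] Matrix (Fin n) (Fin n) ℝ :=
    LinearMap.toContinuousLinearMap
      ((Matrix.transposeLinearEquiv (Fin n) (Fin n) ℝ ℝ).toLinearMap) with hL
  have hLapp : ∀ M : Matrix (Fin n) (Fin n) ℝ, L M = Mᵀ := fun M => rfl
  have hΦcont : ContinuousOn Φ (Set.Icc (0:ℝ) T) :=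
    fun t ht => (hΦ t ht).continuousWithinAt
  have key : ∀ t ∈ Set.Icc (0:ℝ) T,
      (fun s => (Φ s)ᵀ * J * Φ s) t = (fun s => (Φ s)ᵀ * J * Φ s) 0 := by
    apply constant_of_has_deriv_right_zero
    · exact ((L.continuous.comp_continuousOn hΦcont).mul continuousOn_const).mul hΦcont
    · intro t ht
      have htIcc : t ∈ Set.Icc (0:ℝ) T := Set.mem_Icc_of_Ico ht
      have hmem : Set.Icc (0:ℝ) T ∈ nhdsWithin t (Set.Ici t) := Icc_mem_nhdsGE_of_mem ht
      have hd : HasDerivWithinAt Φ ((K t)ᵀ * D t * K t * Jᵀ * Φ t) (Set.Ici t) t :=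
        (hΦ t htIcc).mono_of_mem_nhdsWithin hmem
      have hdT : HasDerivWithinAt (fun s => (Φ s)ᵀ)
          (((K t)ᵀ * D t * K t * Jᵀ * Φ t)ᵀ) (Set.Ici t) t := by
        have := L.hasFDerivAt.comp_hasDerivWithinAt t hd
        exact this
      have hprod := (hdT.mul_const J).mul hd
      have hzero : ((K t)ᵀ * D t * K t * Jᵀ * Φ t)ᵀ * J * Φ t
          + (Φ t)ᵀ * J * ((K t)ᵀ * D t * K t * Jᵀ * Φ t) = 0 := by
        have hDt := hD t htIcc
        simp only [transpose_mul, transpose_transpose, hDt, hJ, transpose_neg,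
          neg_neg, Matrix.mul_assoc, Matrix.neg_mul, Matrix.mul_neg]
        abel
      rw [hzero] at hprod
      exact hprod
  intro t ht
  have := key t ht
  simpa [hΦ0] using this
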